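/- With Q_d(p) = ∑_{|α^{(i)}| ≤ p, |α^{(j)}| ≤ p} ∏_{k=1}^{d} (α_k^{(i)} + α_k^{(j)} + 1) (sums over multi-indices in ℕ^d of total degree at most p), one has Q_d(p) / p^{3d} → C(4d, 2d) / (3d)! as p → ∞. -/

import Mathlib

open Filter

/-- The set of multi-indices `α ∈ ℕ^d` with `|α| ≤ p`. -/
def multiIndexSet (d p : ℕ) : Finset (Fin d → ℕ) :=
  (Fintype.piFinset fun _ : Fin d => Finset.range (p + 1)).filter fun α => ∑ k, α k ≤ p

/-- `Q_d(p) = ∑_{|α⁽ⁱ⁾|≤p} ∑_{|α⁽ʲ⁾|≤p} ∏_k (α_k⁽ⁱ⁾ + α_k⁽ʲ⁾ + 1)`. -/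
def Qd (d p : ℕ) : ℕ :=
  ∑ i ∈ multiIndexSet d p, ∑ j ∈ multiIndexSet d p, ∏ k, (i k + j k + 1)

section QdAux

open Finset Finset.Nat

lemma QdL1 {m k : ℕ} (h : m ≤ k) (n : ℕ) :
    ∑ x ∈ antidiagonal n, (x.2 + m).choose k = (n + m + 1).choose (k+1) := by
  induction n with
  | zero =>
      simp [Nat.choose_succ_succ, Nat.choose_eq_zero_of_lt (Nat.lt_succ_of_le h)]
  | succ n ih =>
      rw [antidiagonal_succ, Finset.sum_cons, Finset.sum_map]
      simp only [Function.Embedding.coe_prodMap, Prod.map_snd, Function.Embedding.coeFn_mk,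
        Function.Embedding.refl_apply]
      rw [ih, show n + 1 + m + 1 = (n + m + 1) + 1 by omega, Nat.choose_succ_succ (n + m + 1) k]
      simp only [Nat.succ_eq_add_one, show n + 1 + m = n + m + 1 from by omega]

lemma QdL2 {m k : ℕ} (h : m ≤ k) (n : ℕ) :
    ∑ x ∈ antidiagonal n, x.1 * (x.2 + m).choose k = (n + m + 1).choose (k+2) := by
  induction n with
  | zero =>
      simp [Nat.choose_eq_zero_of_lt (show m + 1 < k + 2 by omega)]
  | succ n ih =>
      rw [antidiagonal_succ, Finset.sum_cons, Finset.sum_map]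
      simp only [Function.Embedding.coe_prodMap, Prod.map_snd, Prod.map_fst,
        Function.Embedding.coeFn_mk, Function.Embedding.refl_apply]
      have : ∀ x : ℕ × ℕ, (Nat.succ x.1) * (x.2 + m).choose k
          = x.1 * (x.2 + m).choose k + (x.2 + m).choose k := by
        intro x; rw [Nat.succ_mul]
      rw [Finset.sum_congr rfl fun x _ => this x, Finset.sum_add_distrib, ih, QdL1 h,
        show n + 1 + m + 1 = (n + m + 1) + 1 by omega, Nat.choose_succ_succ (n + m + 1) (k+1)]
      simp only [Nat.succ_eq_add_one, show n + 1 + m = n + m + 1 from by omega,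
        show k + 1 + 1 = k + 2 from by omega]
      omega

lemma Qd_pascal_sum (d : ℕ) (g : ℕ → ℕ) :
    ∑ r ∈ range (d+2), (d+1).choose r * g r
      = ∑ r ∈ range (d+1), d.choose r * (g r + g (r+1)) := by
  rw [Finset.sum_range_succ']
  have h1 : ∀ r, (d+1).choose (r+1) * g (r+1)
      = d.choose r * g (r+1) + d.choose (r+1) * g (r+1) := by
    intro r; rw [Nat.choose_succ_succ, Nat.add_mul]
  rw [Finset.sum_congr rfl fun r _ => h1 r, Finset.sum_add_distrib]
  have h2 : ∑ r ∈ range (d+1), d.choose (r+1) * g (r+1) + (d+1).choose 0 * g 0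
      = ∑ r ∈ range (d+1), d.choose r * g r := by
    rw [Finset.sum_range_succ, Nat.choose_succ_self, zero_mul, add_zero,
      Nat.choose_zero_right, one_mul]
    have := Finset.sum_range_succ' (fun r => d.choose r * g r) d
    simp only [Nat.choose_zero_right, one_mul] at this
    rw [← this]
  rw [add_assoc, h2]
  rw [← Finset.sum_add_distrib]
  exact Finset.sum_congr rfl fun r _ => by rw [mul_add]; omega

/-- Recursive form of the double convolution sum. -/
def QdR : ℕ → ℕ → ℕ → ℕ
  | 0, _, _ => 1
  | d+1, p, q => ∑ a ∈ range (p+1), ∑ b ∈ range (q+1), (a + b + 1) * QdR d (p - a) (q - b)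

/-- Closed form. -/
def QdF (d p q : ℕ) : ℕ :=
  ∑ r ∈ range (d+1), d.choose r * ((p + (2*d - r)).choose (2*d - r) * (q + d).choose (d + r))

lemma QdRF (d p q : ℕ) : QdR d p q = QdF d p q := by
  induction d generalizing p q with
  | zero => simp [QdR, QdF]
  | succ d ih =>
      have step1 : QdR (d+1) p q
          = ∑ x ∈ antidiagonal p, ∑ y ∈ antidiagonal q, (x.1 + y.1 + 1) * QdF d x.2 y.2 := by
        rw [QdR]
        rw [← Finset.Nat.sum_antidiagonal_eq_sum_range_succ
          (fun a c => ∑ b ∈ range (q+1), (a + b + 1) * QdR d c (q - b))]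
        refine Finset.sum_congr rfl fun x hx => ?_
        rw [← Finset.Nat.sum_antidiagonal_eq_sum_range_succ
          (fun b c => (x.1 + b + 1) * QdR d x.2 c)]
        exact Finset.sum_congr rfl fun y hy => by rw [ih]
      set g : ℕ → ℕ := fun r =>
        (p + (2*(d+1) - r)).choose (2*(d+1) - r) * (q + (d+1)).choose ((d+1) + r) with hg
      have claimB : QdF (d+1) p q = ∑ r ∈ range (d+1), d.choose r * (g r + g (r+1)) :=
        Qd_pascal_sum d g
      have key : ∀ r ∈ range (d+1),
          ∑ x ∈ antidiagonal p, ∑ y ∈ antidiagonal q,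
            (x.1 + y.1 + 1) * (d.choose r *
              ((x.2 + (2*d - r)).choose (2*d - r) * (y.2 + d).choose (d + r)))
          = d.choose r * (g r + g (r+1)) := by
        intro r hr
        rw [Finset.mem_range] at hr
        set M := 2*d - r with hM
        set c := d.choose r with hc
        have expand : ∀ x y : ℕ × ℕ,
            (x.1 + y.1 + 1) * (c * ((x.2 + M).choose M * (y.2 + d).choose (d + r)))
            = c * (((x.1 + 1) * (x.2 + M).choose M) * (y.2 + d).choose (d + r))
              + c * ((x.2 + M).choose M * (y.1 * (y.2 + d).choose (d + r))) := by
          intro x y; ring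
        simp only [expand]
        rw [Finset.sum_congr rfl fun x _ => Finset.sum_add_distrib]
        rw [Finset.sum_add_distrib]
        simp only [← Finset.mul_sum]
        rw [← Finset.sum_mul, ← Finset.sum_mul]
        have s1 : ∑ x ∈ antidiagonal p, (x.1 + 1) * (x.2 + M).choose M
            = (p + M + 2).choose (M + 2) := by
          have : ∀ x : ℕ × ℕ, (x.1 + 1) * (x.2 + M).choose M
              = x.1 * (x.2 + M).choose M + (x.2 + M).choose M := fun x => by ring
          rw [Finset.sum_congr rfl fun x _ => this x, Finset.sum_add_distrib,
            QdL2 (le_refl M) p, QdL1 (le_refl M) p,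
            show p + M + 2 = (p + M + 1) + 1 from by omega,
            Nat.choose_succ_succ (p + M + 1) (M + 1)]
          simp only [Nat.succ_eq_add_one, show M + 1 + 1 = M + 2 from by omega]
          omega
        have s2 := QdL1 (Nat.le_add_right d r) q
        have s3 := QdL1 (le_refl M) p
        have s4 := QdL2 (Nat.le_add_right d r) q
        rw [s1, s2, s3, s4]
        have e1 : g r = (p + M + 2).choose (M + 2) * (q + d + 1).choose (d + r + 1) := by
          show (p + (2*(d+1) - r)).choose (2*(d+1) - r) * (q + (d+1)).choose ((d+1) + r) = _
          rw [show 2*(d+1) - r = M + 2 from by omega,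
            show p + (M + 2) = p + M + 2 from by omega,
            show q + (d+1) = q + d + 1 from by omega,
            show (d+1) + r = d + r + 1 from by omega]
        have e2 : g (r+1) = (p + M + 1).choose (M + 1) * (q + d + 1).choose (d + r + 2) := by
          show (p + (2*(d+1) - (r+1))).choose (2*(d+1) - (r+1)) *
            (q + (d+1)).choose ((d+1) + (r+1)) = _
          rw [show 2*(d+1) - (r+1) = M + 1 from by omega,
            show p + (M + 1) = p + M + 1 from by omega,
            show q + (d+1) = q + d + 1 from by omega,
            show (d+1) + (r+1) = d + r + 2 from by omega]
        rw [e1, e2]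
        ring
      rw [step1, claimB]
      calc ∑ x ∈ antidiagonal p, ∑ y ∈ antidiagonal q, (x.1 + y.1 + 1) * QdF d x.2 y.2
          = ∑ x ∈ antidiagonal p, ∑ r ∈ range (d+1), ∑ y ∈ antidiagonal q,
              (x.1 + y.1 + 1) * (d.choose r *
                ((x.2 + (2*d - r)).choose (2*d - r) * (y.2 + d).choose (d + r))) := by
            refine Finset.sum_congr rfl fun x _ => ?_
            rw [← Finset.sum_comm]
            refine Finset.sum_congr rfl fun y _ => ?_
            rw [QdF, Finset.mul_sum]
        _ = ∑ r ∈ range (d+1), ∑ x ∈ antidiagonal p, ∑ y ∈ antidiagonal q,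
              (x.1 + y.1 + 1) * (d.choose r *
                ((x.2 + (2*d - r)).choose (2*d - r) * (y.2 + d).choose (d + r))) :=
            Finset.sum_comm
        _ = ∑ r ∈ range (d+1), d.choose r * (g r + g (r+1)) :=
            Finset.sum_congr rfl key

lemma mem_multiIndexSet {d p : ℕ} {i : Fin d → ℕ} :
    i ∈ multiIndexSet d p ↔ ∑ k, i k ≤ p := by
  simp only [multiIndexSet, Finset.mem_filter, Fintype.mem_piFinset, Finset.mem_range]
  refine ⟨fun h => h.2, fun h => ⟨fun k => ?_, h⟩⟩
  have : i k ≤ ∑ k, i k := Finset.single_le_sum (fun k _ => Nat.zero_le _) (Finset.mem_univ k)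
  omega

lemma sum_multiIndexSet_succ {M : Type*} [AddCommMonoid M] (d p : ℕ)
    (f : (Fin (d+1) → ℕ) → M) :
    ∑ i ∈ multiIndexSet (d+1) p, f i
      = ∑ a ∈ range (p+1), ∑ t ∈ multiIndexSet d (p - a), f (Fin.cons a t) := by
  rw [Finset.sum_sigma']
  refine Finset.sum_bij' (fun i _ => (⟨i 0, Fin.tail i⟩ : Σ _ : ℕ, (Fin d → ℕ)))
    (fun x _ => Fin.cons x.1 x.2) ?_ ?_ ?_ ?_ ?_
  · intro i hi
    rw [mem_multiIndexSet, Fin.sum_univ_succ] at hi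
    rw [Finset.mem_sigma, Finset.mem_range, mem_multiIndexSet]
    dsimp only
    refine ⟨by omega, ?_⟩
    have ht : ∑ k, Fin.tail i k = ∑ k : Fin d, i (Fin.succ k) :=
      Finset.sum_congr rfl fun k _ => rfl
    rw [ht]
    omega
  · intro x hx
    rw [Finset.mem_sigma, Finset.mem_range, mem_multiIndexSet] at hx
    rw [mem_multiIndexSet, Fin.sum_univ_succ]
    simp only [Fin.cons_zero, Fin.cons_succ]
    omega
  · intro i hi
    exact Fin.cons_self_tail i
  · intro x hx
    ext
    · simp
    · simp [Fin.tail]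
  · intro i hi
    rw [Fin.cons_self_tail]

lemma Qd_eq_QdR (d p q : ℕ) :
    (∑ i ∈ multiIndexSet d p, ∑ j ∈ multiIndexSet d q, ∏ k, (i k + j k + 1)) = QdR d p q := by
  induction d generalizing p q with
  | zero =>
      have hu : ∀ n : ℕ, multiIndexSet 0 n = Finset.univ := by
        intro n; ext i
        simp only [mem_multiIndexSet, Finset.mem_univ, iff_true]
        simp
      simp [hu, QdR]
  | succ d ih =>
      rw [QdR, sum_multiIndexSet_succ d p
        (fun i => ∑ j ∈ multiIndexSet (d+1) q, ∏ k, (i k + j k + 1))]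
      refine Finset.sum_congr rfl fun a _ => ?_
      rw [Finset.sum_comm]
      rw [sum_multiIndexSet_succ d q]
      refine Finset.sum_congr rfl fun b _ => ?_
      rw [Finset.sum_comm]
      have hprod : ∀ (t tj : Fin d → ℕ),
          (∏ k, (Fin.cons a t k + Fin.cons b tj k + 1))
          = (a + b + 1) * ∏ k, (t k + tj k + 1) := by
        intro t tj
        rw [Fin.prod_univ_succ]
        simp only [Fin.cons_zero, Fin.cons_succ]
      simp only [hprod]
      simp only [← Finset.mul_sum]
      rw [ih]

lemma Qd_closed_form (d p : ℕ) :
    Qd d p = ∑ r ∈ range (d+1),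
      d.choose r * ((p + (2*d - r)).choose (2*d - r) * (p + d).choose (d + r)) := by
  rw [Qd, Qd_eq_QdR, QdRF, QdF]

lemma Qd_lemA (b : ℝ) : Tendsto (fun p : ℕ => ((p : ℝ) + b) / p) atTop (nhds 1) := by
  have h : Tendsto (fun p : ℕ => 1 + b * ((p : ℝ))⁻¹) atTop (nhds (1 + b * 0)) :=
    tendsto_const_nhds.add (tendsto_const_nhds.mul tendsto_inv_atTop_nhds_zero_nat)
  rw [mul_zero, add_zero] at h
  refine h.congr' ?_
  filter_upwards [eventually_ge_atTop 1] with p hp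
  have hp0 : (p : ℝ) ≠ 0 := by positivity
  field_simp

lemma Qd_choose_limit (c n : ℕ) :
    Tendsto (fun p : ℕ => (((p + c).choose n : ℕ) : ℝ) / (p : ℝ) ^ n) atTop
      (nhds (1 / (n.factorial : ℝ))) := by
  have hprod : Tendsto (fun p : ℕ => ∏ i ∈ range n, (((p : ℝ) + ((c : ℝ) - i)) / (p : ℝ)))
      atTop (nhds 1) := by
    have := tendsto_finset_prod (f := fun (i : ℕ) (p : ℕ) => ((p : ℝ) + ((c : ℝ) - i)) / p)
      (range n) (fun i _ => Qd_lemA ((c : ℝ) - i))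
    simpa using this
  have h2 : Tendsto (fun p : ℕ =>
      (∏ i ∈ range n, (((p : ℝ) + ((c : ℝ) - i)) / (p : ℝ))) * (1 / (n.factorial : ℝ)))
      atTop (nhds (1 / (n.factorial : ℝ))) := by
    simpa using hprod.mul_const (1 / (n.factorial : ℝ))
  refine h2.congr' ?_
  filter_upwards [eventually_ge_atTop n, eventually_ge_atTop 1] with p hpn hp1
  have hp0 : (p : ℝ) ≠ 0 := by positivity
  have hfac : (n.factorial : ℝ) ≠ 0 := by positivity
  have hchoose : (((p + c).choose n : ℕ) : ℝ)
      = (∏ i ∈ range n, ((p : ℝ) + ((c : ℝ) - i))) / (n.factorial : ℝ) := by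
    have h1 : (p + c).descFactorial n = n.factorial * (p + c).choose n :=
      Nat.descFactorial_eq_factorial_mul_choose _ _
    have h2' : ((p + c).descFactorial n : ℝ) = ∏ i ∈ range n, ((p : ℝ) + ((c : ℝ) - i)) := by
      rw [Nat.descFactorial_eq_prod_range]
      push_cast
      refine Finset.prod_congr rfl fun i hi => ?_
      rw [Finset.mem_range] at hi
      have : (i : ℕ) ≤ p + c := by omega
      push_cast [Nat.cast_sub this]
      ring
    have := congrArg (fun x : ℕ => (x : ℝ)) h1
    push_cast at this
    rw [h2'] at this
    field_simp at this ⊢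
    linarith [this]
  rw [hchoose, Finset.prod_div_distrib, Finset.prod_const, Finset.card_range]
  field_simp

lemma Qd_vand (d : ℕ) :
    ∑ r ∈ range (d+1), d.choose r * (3*d).choose (d+r) = (4*d).choose (2*d) := by
  have h := Nat.add_choose_eq d (3*d) (2*d)
  rw [Finset.Nat.sum_antidiagonal_eq_sum_range_succ_mk] at h
  rw [show d + 3*d = 4*d from by ring] at h
  rw [h]
  rw [← Finset.sum_subset (Finset.range_subset_range.2 (show d+1 ≤ 2*d+1 by omega))
    (fun x _ hx => by
      rw [Finset.mem_range, not_lt] at hx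
      rw [Nat.choose_eq_zero_of_lt (show d < x by omega), zero_mul])]
  refine Finset.sum_congr rfl fun r hr => ?_
  rw [Finset.mem_range] at hr
  congr 1
  rw [← Nat.choose_symm (show d + r ≤ 3*d by omega), show 3*d - (d+r) = 2*d - r from by omega]

lemma Qd_sum_limit_val (d : ℕ) :
    ∑ r ∈ range (d+1), (d.choose r : ℝ) * (1 / ((2*d - r).factorial : ℝ))
        * (1 / (((d + r).factorial : ℕ) : ℝ))
      = ((4*d).choose (2*d) : ℝ) / ((3*d).factorial : ℝ) := by
  have hterm : ∀ r ∈ range (d+1),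
      (d.choose r : ℝ) * (1 / ((2*d - r).factorial : ℝ)) * (1 / (((d + r).factorial : ℕ) : ℝ))
      = ((d.choose r * (3*d).choose (d+r) : ℕ) : ℝ) / ((3*d).factorial : ℝ) := by
    intro r hr
    rw [Finset.mem_range] at hr
    have h := Nat.choose_mul_factorial_mul_factorial (show d + r ≤ 3*d by omega)
    rw [show 3*d - (d+r) = 2*d - r from by omega] at h
    have hc := congrArg (fun x : ℕ => (x : ℝ)) h
    push_cast at hc ⊢
    have h1 : ((2*d - r).factorial : ℝ) ≠ 0 := by positivity
    have h2 : (((d + r).factorial : ℕ) : ℝ) ≠ 0 := by positivity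
    have h3 : (((3*d).factorial : ℕ) : ℝ) ≠ 0 := by positivity
    field_simp
    nlinarith [hc]
  rw [Finset.sum_congr rfl hterm, ← Finset.sum_div]
  congr 1
  rw [← Nat.cast_sum]
  exact_mod_cast congrArg (fun x : ℕ => (x : ℝ)) (Qd_vand d)

end QdAux

/-- `Q_d(p) / p^{3d} → C(4d, 2d) / (3d)!` as `p → ∞`. -/
theorem Qd_asymptotics (d : ℕ) (hd : 1 ≤ d) :
    Tendsto (fun p : ℕ => (Qd d p : ℝ) / (p : ℝ) ^ (3 * d)) atTop
      (nhds (((4 * d).choose (2 * d) : ℝ) / ((3 * d).factorial : ℝ))) := by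
  classical
  have hlim : Tendsto (fun p : ℕ => ∑ r ∈ Finset.range (d+1), (d.choose r : ℝ) *
      ((((p + (2*d - r)).choose (2*d - r) : ℕ) : ℝ) / (p : ℝ) ^ (2*d - r)) *
      ((((p + d).choose (d + r) : ℕ) : ℝ) / (p : ℝ) ^ (d + r))) atTop
      (nhds (∑ r ∈ Finset.range (d+1), (d.choose r : ℝ) *
        (1 / ((2*d - r).factorial : ℝ)) * (1 / (((d + r).factorial : ℕ) : ℝ)))) :=
    tendsto_finset_sum _ fun r _ =>
      (tendsto_const_nhds.mul (Qd_choose_limit (2*d - r) (2*d - r))).mul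
        (Qd_choose_limit d (d + r))
  rw [Qd_sum_limit_val d] at hlim
  refine hlim.congr' ?_
  filter_upwards [eventually_ge_atTop 1] with p hp
  have hp0 : (p : ℝ) ≠ 0 := by positivity
  rw [Qd_closed_form d p]
  push_cast
  rw [Finset.sum_div]
  refine Finset.sum_congr rfl fun r hr => ?_
  rw [Finset.mem_range] at hr
  have hsplit : (p : ℝ) ^ (3*d) = (p : ℝ) ^ (2*d - r) * (p : ℝ) ^ (d + r) := by
    rw [← pow_add]
    congr 1
    omega
  rw [hsplit]
  field_simp
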